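/- Neither implication between +σ and +ω holds in general: there exists a consistent defeasible theory D and literals d, c such that D ⊢ +ω d and D ⊢ −σ d, and D ⊢ +σ ¬c and D ⊢ −ω ¬c. -/
import Mathlib


namespace DL

abbrev Atom := ℕ

/-- A literal: an atom with a polarity. -/
structure Lit where
  atom : Atom
  pos : Bool
deriving DecidableEq

/-- The complement `∼p` of a literal. -/
def Lit.neg (l : Lit) : Lit := ⟨l.atom, !l.pos⟩

/-- A defeasible rule: a finite set of antecedent literals and a head literal. -/
structure Rule where
  ante : Finset Lit
  head : Lit
deriving DecidableEq

/-- A defeasible theory: facts, defeasible rules, and a superiority relation. -/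
structure DTheory where
  facts : Finset Lit
  rules : Finset Rule
  sup : Rule → Rule → Prop

/-- A superiority relation is acyclic iff its transitive closure is irreflexive. -/
def Acyclic (sup : Rule → Rule → Prop) : Prop :=
  Irreflexive (Relation.TransGen sup)

def DTheory.FactsConsistent (D : DTheory) : Prop :=
  ∀ l ∈ D.facts, l.neg ∉ D.facts

/-- Well-formedness of a defeasible theory: consistent facts, acyclic superiority
relation defined on the rules of the theory. -/
def DTheory.WellFormed (D : DTheory) : Prop :=
  D.FactsConsistent ∧ Acyclic D.sup ∧ ∀ r s, D.sup r s → r ∈ D.rules ∧ s ∈ D.rules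

/-- Proof tags: Δ, Σ, σ, ω, φ, ∂. -/
inductive Tag | delta | Sig | sgm | omg | phi | prt
deriving DecidableEq

/-- A tagged literal: a tag, a sign (`true` = `+`, `false` = `−`), and a literal. -/
abbrev TLit := Tag × Bool × Lit

/-- The proof conditions of Defeasible Logic (defeasible rules only), relative to
the preceding part `P` of a proof sequence. -/
def Cond (D : DTheory) (P : List TLit) : Tag → Bool → Lit → Prop
  | .delta, true, q => q ∈ D.facts
  | .delta, false, q => q ∉ D.facts
  | .Sig, true, q =>
      (Tag.delta, true, q) ∈ P ∨
      ∃ r ∈ D.rules, r.head = q ∧ ∀ a ∈ r.ante, (Tag.Sig, true, a) ∈ P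
  | .Sig, false, q =>
      (Tag.delta, true, q) ∉ P ∧
      ∀ r ∈ D.rules, r.head = q → ∃ a ∈ r.ante, (Tag.Sig, false, a) ∈ P
  | .sgm, true, q =>
      (Tag.delta, true, q) ∈ P ∨
      ∃ r ∈ D.rules, r.head = q ∧ (∀ a ∈ r.ante, (Tag.sgm, true, a) ∈ P) ∧
        ∀ s ∈ D.rules, s.head = q.neg →
          (∃ a ∈ s.ante, (Tag.prt, false, a) ∈ P) ∨ ¬ D.sup s r
  | .sgm, false, q =>
      (Tag.delta, true, q) ∉ P ∧
      ∀ r ∈ D.rules, r.head = q →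
        (∃ a ∈ r.ante, (Tag.sgm, false, a) ∈ P) ∨
        ∃ s ∈ D.rules, s.head = q.neg ∧ (∀ a ∈ s.ante, (Tag.prt, true, a) ∈ P) ∧ D.sup s r
  | .omg, true, q =>
      (Tag.delta, true, q) ∈ P ∨
      ∃ r ∈ D.rules, r.head = q ∧ ∀ a ∈ r.ante, (Tag.prt, true, a) ∈ P
  | .omg, false, q =>
      (Tag.delta, true, q) ∉ P ∧
      ∀ r ∈ D.rules, r.head = q → ∃ a ∈ r.ante, (Tag.prt, false, a) ∈ P
  | .phi, true, q =>
      (Tag.delta, true, q) ∈ P ∨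
      ∃ r ∈ D.rules, r.head = q ∧ (∀ a ∈ r.ante, (Tag.phi, true, a) ∈ P) ∧
        ∀ s ∈ D.rules, s.head = q.neg → ∃ a ∈ s.ante, (Tag.Sig, false, a) ∈ P
  | .phi, false, q =>
      (Tag.delta, true, q) ∉ P ∧
      ∀ r ∈ D.rules, r.head = q →
        (∃ a ∈ r.ante, (Tag.phi, false, a) ∈ P) ∨
        ∃ s ∈ D.rules, s.head = q.neg ∧ ∀ a ∈ s.ante, (Tag.Sig, true, a) ∈ P
  | .prt, true, q =>
      (Tag.delta, true, q) ∈ P ∨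
      ((Tag.delta, false, q.neg) ∈ P ∧
       (∃ r ∈ D.rules, r.head = q ∧ ∀ a ∈ r.ante, (Tag.prt, true, a) ∈ P) ∧
       ∀ s ∈ D.rules, s.head = q.neg →
         (∃ a ∈ s.ante, (Tag.prt, false, a) ∈ P) ∨
         ∃ t ∈ D.rules, t.head = q ∧ (∀ a ∈ t.ante, (Tag.prt, true, a) ∈ P) ∧ D.sup t s)
  | .prt, false, q =>
      (Tag.delta, true, q) ∉ P ∧
      ((Tag.delta, true, q.neg) ∈ P ∨
       (∀ r ∈ D.rules, r.head = q → ∃ a ∈ r.ante, (Tag.prt, false, a) ∈ P) ∨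
       ∃ s ∈ D.rules, s.head = q.neg ∧ (∀ a ∈ s.ante, (Tag.prt, true, a) ∈ P) ∧
         ∀ t ∈ D.rules, t.head = q →
           (∃ a ∈ t.ante, (Tag.prt, false, a) ∈ P) ∨ ¬ D.sup t s)

/-- A proof (derivation) is a finite sequence of tagged literals each of which
satisfies the proof condition relative to the preceding part of the sequence. -/
inductive ValidProof (D : DTheory) : List TLit → Prop
  | nil : ValidProof D []
  | snoc {P : List TLit} {t : Tag} {s : Bool} {q : Lit} :
      ValidProof D P → Cond D P t s q → ValidProof D (P ++ [(t, s, q)])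

/-- `D ⊢ ±# q`: some valid proof in `D` contains the tagged literal. -/
def Proves (D : DTheory) (t : Tag) (s : Bool) (q : Lit) : Prop :=
  ∃ P, ValidProof D P ∧ (t, s, q) ∈ P

/-- A theory is consistent iff it never defeasibly proves both a literal and
its complement. -/
def Consistent (D : DTheory) : Prop :=
  ∀ p : Lit, ¬ (Proves D .prt true p ∧ Proves D .prt true p.neg)

/-- `a` depends on `b` iff `b = a`, or for every rule for `a` either `b` is an
antecedent or some antecedent depends on `b` (least such relation,
impredicatively encoded). -/
def DependsOn (D : DTheory) (a b : Lit) : Prop :=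
  ∀ S : Lit → Lit → Prop,
    (∀ x, S x x) →
    (∀ x y, (∀ r ∈ D.rules, r.head = x → y ∈ r.ante ∨ ∃ c ∈ r.ante, S c y) → S x y) →
    S a b

/-- `p` is ∂-unreachable iff every rule for `p` either has two antecedents
depending on complementary literals or has a ∂-unreachable antecedent
(least such predicate, impredicatively encoded). -/
def Unreachable (D : DTheory) (p : Lit) : Prop :=
  ∀ S : Lit → Prop,
    (∀ x, (∀ r ∈ D.rules, r.head = x →
        (∃ l : Lit, ∃ a ∈ r.ante, ∃ b ∈ r.ante, DependsOn D a l ∧ DependsOn D b l.neg) ∨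
        ∃ d ∈ r.ante, S d) → S x) →
    S p

/-- The literal `p` appears in the theory `D` (its atom occurs in `D`). -/
def AppearsIn (p : Lit) (D : DTheory) : Prop :=
  (∃ l ∈ D.facts, l.atom = p.atom) ∨
  ∃ r ∈ D.rules, r.head.atom = p.atom ∨ ∃ l ∈ r.ante, l.atom = p.atom

/-- Positive part of the belief set of a defeasible theory. -/
def BSplus (D : DTheory) : Set Lit := {p | AppearsIn p D ∧ Proves D .prt true p}

/-- Negative part of the belief set of a defeasible theory. -/
def BSminus (D : DTheory) : Set Lit := {p | AppearsIn p D ∧ Proves D .prt false p}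

/-- The belief set of a defeasible theory. -/
def BS (D : DTheory) : Set Lit := BSplus D ∪ BSminus D

/-- Edge of the atom dependency graph: from atom `a` to atom `b` whenever some
rule has head with atom `b` and an antecedent literal with atom `a`. -/
def AtomEdge (D : DTheory) (a b : Atom) : Prop :=
  ∃ r ∈ D.rules, r.head.atom = b ∧ ∃ l ∈ r.ante, l.atom = a

/-- A theory is decisive iff every literal appearing in it is defeasibly
provable or defeasibly refuted. -/
def Decisive (D : DTheory) : Prop :=
  ∀ p : Lit, AppearsIn p D → Proves D .prt true p ∨ Proves D .prt false p

end DL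


namespace W
open DL

def Q : Lit := ⟨0, true⟩
def nQ : Lit := ⟨0, false⟩
def X : Lit := ⟨1, true⟩
def nX : Lit := ⟨1, false⟩
def C : Lit := ⟨2, true⟩

def Rr : Rule := ⟨∅, Q⟩
def Rs : Rule := ⟨∅, nQ⟩
def Rv : Rule := ⟨∅, X⟩
def Rw : Rule := ⟨∅, nX⟩
def Ru : Rule := ⟨{X}, C⟩

def D0 : DTheory := ⟨∅, {Rr, Rs, Rv, Rw, Ru}, fun a b => a = Rs ∧ b = Rr⟩

lemma supdom : ∀ a b, D0.sup a b → a = Rs ∧ b = Rr := fun _ _ h => h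

lemma noDelta {P} (h : ValidProof D0 P) : ∀ l, (Tag.delta, true, l) ∉ P := by
  induction h with
  | nil => simp
  | snoc hP hc ih =>
    intro l hl
    rcases List.mem_append.1 hl with h1 | h1
    · exact ih l h1
    · simp at h1
      obtain ⟨ht, hs, hq⟩ := h1
      subst ht; subst hs; subst hq
      simp [Cond, D0] at hc

lemma inv {P} (h : ValidProof D0 P) : ∀ l, (Tag.prt, true, l) ∈ P → l = nQ := by
  induction h with
  | nil => simp
  | snoc hP hc ih =>
    rename_i P t s q
    intro l hl
    rcases List.mem_append.1 hl with h1 | h1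
    · exact ih l h1
    · simp at h1
      obtain ⟨ht, hs, hq⟩ := h1
      subst ht; subst hs; subst hq
      rcases hc with hd | ⟨-, ⟨r', hr', hhead, hantes⟩, hatt⟩
      · exact absurd hd (noDelta hP l)
      · have : r' = Rr ∨ r' = Rs ∨ r' = Rv ∨ r' = Rw ∨ r' = Ru := by
          simpa [D0, Finset.mem_insert, Finset.mem_singleton] using hr'
        rcases this with rfl | rfl | rfl | rfl | rfl
        · -- head Q, attacker Rs with sup needed on t
          exfalso
          have hQ : l = Q := hhead.symm
          subst hQ
          have := hatt Rs (by simp [D0, Rs]) (by simp [Rs, Q, Lit.neg, nQ])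
          rcases this with ⟨a, ha, -⟩ | ⟨t, -, -, -, hsup⟩
          · simp [Rs] at ha
          · exact absurd (supdom _ _ hsup).2 (by simp [Rs, Rr, Q, nQ])
        · exact hhead.symm
        · exfalso
          have hX : l = X := hhead.symm
          subst hX
          have := hatt Rw (by simp [D0, Rw]) (by simp [Rw, X, Lit.neg, nX])
          rcases this with ⟨a, ha, -⟩ | ⟨t, -, -, -, hsup⟩
          · simp [Rw] at ha
          · exact absurd (supdom _ _ hsup).2 (by simp [Rw, Rr, nX, Q])
        · exfalso
          have hX : l = nX := hhead.symm
          subst hX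
          have := hatt Rv (by simp [D0, Rv]) (by simp [Rv, nX, Lit.neg, X])
          rcases this with ⟨a, ha, -⟩ | ⟨t, -, -, -, hsup⟩
          · simp [Rv] at ha
          · exact absurd (supdom _ _ hsup).2 (by simp [Rv, Rr, X, Q])
        · exfalso
          have hx : (Tag.prt, true, X) ∈ P := hantes X (by simp [Ru])
          have := ih X hx
          simp [X, nQ] at this

end W

namespace W
open DL

def L1 : List TLit := [(Tag.sgm, false, Q)]
def L2 : List TLit := L1 ++ [(Tag.omg, true, Q)]
def L3 : List TLit := L2 ++ [(Tag.sgm, true, X)]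
def L4 : List TLit := L3 ++ [(Tag.prt, false, X)]
def L5 : List TLit := L4 ++ [(Tag.sgm, true, C)]
def L6 : List TLit := L5 ++ [(Tag.omg, false, C)]

lemma memRules : ∀ r, r ∈ D0.rules ↔ (r = Rr ∨ r = Rs ∨ r = Rv ∨ r = Rw ∨ r = Ru) := by
  intro r; simp [D0, Finset.mem_insert, Finset.mem_singleton]

lemma vp6 : ValidProof D0 L6 := by
  have h1 : ValidProof D0 L1 := by
    have := ValidProof.snoc (ValidProof.nil (D := D0)) (t := Tag.sgm) (s := false) (q := Q) ?_
    · simpa [L1] using this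
    · refine ⟨by simp, ?_⟩
      intro r hr hhead
      rcases (memRules r).1 hr with rfl | rfl | rfl | rfl | rfl
      · exact Or.inr ⟨Rs, (memRules Rs).2 (by simp), by decide, by simp [Rs], ⟨rfl, rfl⟩⟩
      all_goals exact absurd hhead (by decide)
  have h2 : ValidProof D0 L2 := by
    refine ValidProof.snoc h1 ?_
    exact Or.inr ⟨Rr, (memRules Rr).2 (by simp), rfl, by simp [Rr]⟩
  have h3 : ValidProof D0 L3 := by
    refine ValidProof.snoc h2 ?_
    right
    refine ⟨Rv, (memRules Rv).2 (by simp), rfl, by simp [Rv], ?_⟩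
    intro s hs hhead
    rcases (memRules s).1 hs with rfl | rfl | rfl | rfl | rfl
    · exact absurd hhead (by decide)
    · exact absurd hhead (by decide)
    · exact absurd hhead (by decide)
    · exact Or.inr (by rintro ⟨-, h⟩; exact absurd h (by decide))
    · exact absurd hhead (by decide)
  have h4 : ValidProof D0 L4 := by
    refine ValidProof.snoc h3 ?_
    refine ⟨by simp [L3, L2, L1], Or.inr (Or.inr ?_)⟩
    refine ⟨Rw, (memRules Rw).2 (by simp), by decide, by simp [Rw], ?_⟩
    intro t ht hhead
    rcases (memRules t).1 ht with rfl | rfl | rfl | rfl | rfl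
    · exact absurd hhead (by decide)
    · exact absurd hhead (by decide)
    · exact Or.inr (by rintro ⟨-, h⟩; exact absurd h (by decide))
    · exact absurd hhead (by decide)
    · exact absurd hhead (by decide)
  have h5 : ValidProof D0 L5 := by
    refine ValidProof.snoc h4 ?_
    right
    refine ⟨Ru, (memRules Ru).2 (by simp), rfl, ?_, ?_⟩
    · intro a ha
      have : a = X := by simpa [Ru] using ha
      subst this
      simp [L4, L3, L2, L1]
    · intro s hs hhead
      exfalso
      rcases (memRules s).1 hs with rfl | rfl | rfl | rfl | rfl
      all_goals exact absurd hhead (by decide)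
  refine ValidProof.snoc h5 ?_
  refine ⟨by simp [L5, L4, L3, L2, L1], ?_⟩
  intro r hr hhead
  rcases (memRules r).1 hr with rfl | rfl | rfl | rfl | rfl
  · exact absurd hhead (by decide)
  · exact absurd hhead (by decide)
  · exact absurd hhead (by decide)
  · exact absurd hhead (by decide)
  · exact ⟨X, by decide, by simp [L5, L4, L3, L2, L1, X]⟩

end W

open DL in
/-- Neither implication between `+σ` and `+ω` holds in general: there is a
consistent defeasible theory and literals `d`, `c` with `+ω d`, `−σ d`,
`+σ c`, `−ω c`. -/
theorem stmt14 :
    ∃ (D : DTheory) (d c : Lit), D.WellFormed ∧ Consistent D ∧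
      Proves D .omg true d ∧ Proves D .sgm false d ∧
      Proves D .sgm true c ∧ Proves D .omg false c := by
  refine ⟨W.D0, W.Q, W.C, ⟨?_, ?_, ?_⟩, ?_, ?_, ?_, ?_, ?_⟩
  · intro l hl; simp [W.D0] at hl
  · intro r hr
    exfalso
    have key : ∀ a b, Relation.TransGen W.D0.sup a b → a = W.Rs ∧ b = W.Rr := by
      intro a b h
      induction h with
      | single h => exact W.supdom _ _ h
      | tail _ h2 ih =>
        obtain ⟨-, rfl⟩ := ih
        exact absurd (W.supdom _ _ h2).1 (by decide)
    obtain ⟨h1, h2⟩ := key _ _ hr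
    rw [h1] at h2
    exact absurd h2 (by decide)
  · rintro r s ⟨rfl, rfl⟩
    exact ⟨(W.memRules _).2 (by simp), (W.memRules _).2 (by simp)⟩
  · rintro p ⟨⟨P1, hv1, hm1⟩, ⟨P2, hv2, hm2⟩⟩
    have e1 := W.inv hv1 p hm1
    have e2 := W.inv hv2 p.neg hm2
    subst e1
    exact absurd e2 (by decide)
  · exact ⟨W.L6, W.vp6, by simp [W.L6, W.L5, W.L4, W.L3, W.L2, W.L1]⟩
  · exact ⟨W.L6, W.vp6, by simp [W.L6, W.L5, W.L4, W.L3, W.L2, W.L1]⟩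
  · exact ⟨W.L6, W.vp6, by simp [W.L6, W.L5, W.L4, W.L3, W.L2, W.L1]⟩
  · exact ⟨W.L6, W.vp6, by simp [W.L6, W.L5, W.L4, W.L3, W.L2, W.L1]⟩
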